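/- An R-module M is distributive (the lattice of submodules is distributive) if and only if for all maximal ideals m of R, the submodules of the localized module M_m are linearly ordered by inclusion. -/

import Mathlib

open Submodule

/-- Stephenson's criterion: the submodule lattice of `M` is distributive iff for all
`x y : M` the ideals `(Rx : y)` and `(Ry : x)` are comaximal. -/
private theorem stephenson
    {R : Type*} [CommRing R] {M : Type*} [AddCommGroup M] [Module R M] :
    (∀ K L N : Submodule R M, (K ⊔ L) ⊓ N = (K ⊓ N) ⊔ (L ⊓ N)) ↔
      (∀ x y : M,
        (span R {x}).colon (span R {y}) ⊔ (span R {y}).colon (span R {x}) = ⊤) := by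
  constructor
  · intro h x y
    rw [eq_top_iff]
    intro r _
    have hxy : x + y ∈ (span R {x} ⊔ span R {y}) ⊓ span R {x + y} :=
      ⟨add_mem (mem_sup_left (mem_span_singleton_self x))
        (mem_sup_right (mem_span_singleton_self y)), mem_span_singleton_self _⟩
    rw [h] at hxy
    obtain ⟨u, ⟨hux, hu⟩, v, ⟨hvy, hv⟩, huv⟩ := mem_sup.mp hxy
    obtain ⟨a, ha⟩ := mem_span_singleton.mp hu
    obtain ⟨b, hb⟩ := mem_span_singleton.mp hv
    have haI : a ∈ (span R {x}).colon (span R {y}) := by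
      rw [mem_colon_span_singleton]
      have : a • y = u - a • x := by
        rw [← ha, smul_add]; abel
      rw [this]
      exact sub_mem hux (smul_mem _ _ (mem_span_singleton_self x))
    have hbI : b ∈ (span R {y}).colon (span R {x}) := by
      rw [mem_colon_span_singleton]
      have : b • x = v - b • y := by
        rw [← hb, smul_add]; abel
      rw [this]
      exact sub_mem hvy (smul_mem _ _ (mem_span_singleton_self y))
    have hcI : 1 - a - b ∈ (span R {x}).colon (span R {y}) := by
      rw [mem_colon_span_singleton]
      have h2 : a • (x + y) + b • (x + y) = x + y := by rw [ha, hb, huv]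
      have : (1 - a - b) • y = -((1 - a - b) • x) := by
        linear_combination (norm := module) -h2
      rw [this]
      exact neg_mem (smul_mem _ _ (mem_span_singleton_self x))
    have h1 : (r : R) = r * ((a + (1 - a - b)) + b) := by ring
    rw [h1]
    exact Ideal.mul_mem_left _ _
      (add_mem (mem_sup_left (add_mem haI hcI)) (mem_sup_right hbI))
  · intro h K L N
    refine le_antisymm ?_
      (sup_le (inf_le_inf le_sup_left le_rfl) (inf_le_inf le_sup_right le_rfl))
    rintro n ⟨hnKL, hnN⟩
    obtain ⟨k, hk, l, hl, hkl⟩ := mem_sup.mp hnKL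
    have h1 : (1 : R) ∈ (span R {k}).colon (span R {l}) ⊔ (span R {l}).colon (span R {k}) := by
      rw [h k l]; trivial
    obtain ⟨s, hs, t, ht, hst⟩ := mem_sup.mp h1
    rw [mem_colon_span_singleton] at hs ht
    have hn : n = s • n + t • n := by
      rw [← add_smul, hst, one_smul]
    rw [hn]
    refine add_mem (mem_sup_left ⟨?_, smul_mem _ _ hnN⟩)
      (mem_sup_right ⟨?_, smul_mem _ _ hnN⟩)
    · have : s • n = s • k + s • l := by rw [← smul_add, hkl]
      rw [this]
      exact add_mem (smul_mem _ _ hk) ((span_singleton_le_iff_mem k K).mpr hk hs)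
    · have : t • n = t • k + t • l := by rw [← smul_add, hkl]
      rw [this]
      exact add_mem ((span_singleton_le_iff_mem l L).mpr hl ht) (smul_mem _ _ hl)

theorem distributive_iff_arithmetical
    {R : Type*} [CommRing R] {M : Type*} [AddCommGroup M] [Module R M] :
    (∀ K L N : Submodule R M, (K ⊔ L) ⊓ N = (K ⊓ N) ⊔ (L ⊓ N)) ↔
      (∀ (m : Ideal R) [m.IsMaximal],
        ∀ K L : Submodule (Localization m.primeCompl)
          (LocalizedModule m.primeCompl M), K ≤ L ∨ L ≤ K) := by
  rw [stephenson]
  constructor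
  · intro h m hm K L
    by_contra hc
    push_neg at hc
    obtain ⟨hKL, hLK⟩ := hc
    obtain ⟨z, hzK, hzL⟩ := Set.not_subset.mp hKL
    obtain ⟨w, hwL, hwK⟩ := Set.not_subset.mp hLK
    set f := LocalizedModule.mkLinearMap m.primeCompl M with hf
    -- replace z, w by images of elements of M
    have key : ∀ z : LocalizedModule m.primeCompl M, ∃ x : M,
        ∀ P : Submodule (Localization m.primeCompl) (LocalizedModule m.primeCompl M),
          (z ∈ P ↔ f x ∈ P) := by
      intro z
      induction z using LocalizedModule.induction_on with
      | _ x s =>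
        refine ⟨x, fun P => ⟨fun hz => ?_, fun hx => ?_⟩⟩
        · have : f x = (s : R) • LocalizedModule.mk x s := by
            rw [LocalizedModule.smul'_mk, ← Submonoid.smul_def, LocalizedModule.mk_cancel]
            rfl
          rw [this]
          exact P.smul_of_tower_mem _ hz
        · have : LocalizedModule.mk x s = Localization.mk 1 s • f x := by
            show _ = Localization.mk 1 s • LocalizedModule.mk x 1
            rw [LocalizedModule.mk_smul_mk, one_smul, mul_one]
          rw [this]
          exact P.smul_mem _ hx
    obtain ⟨x, hx⟩ := key z
    obtain ⟨y, hy⟩ := key w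
    have hxK : f x ∈ K := (hx K).mp hzK
    have hxL : f x ∉ L := fun hc => hzL ((hx L).mpr hc)
    have hyL : f y ∈ L := (hy L).mp hwL
    have hyK : f y ∉ K := fun hc => hwK ((hy K).mpr hc)
    -- comaximality gives an element outside m in one of the colon ideals
    have hnot : ¬((span R {x}).colon (span R {y}) ≤ m) ∨
        ¬((span R {y}).colon (span R {x}) ≤ m) := by
      by_contra hc
      push_neg at hc
      have := sup_le hc.1 hc.2
      rw [h x y, top_le_iff] at this
      exact hm.ne_top this
    have main : ∀ a b : M, f a ∈ K →
        ∀ r : R, r ∉ m → r ∈ (span R {a}).colon (span R {b}) → f b ∈ K := by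
      intro a b haK r hrm hr
      rw [mem_colon_span_singleton] at hr
      obtain ⟨c, hc⟩ := mem_span_singleton.mp hr
      have hru : IsUnit (algebraMap R (Localization m.primeCompl) r) :=
        IsLocalization.map_units _ (⟨r, hrm⟩ : m.primeCompl)
      have heq : algebraMap R (Localization m.primeCompl) r • f b
          = algebraMap R (Localization m.primeCompl) c • f a := by
        rw [algebraMap_smul, algebraMap_smul, ← map_smul, ← map_smul, hc]
      have : f b = (↑hru.unit⁻¹ : Localization m.primeCompl) •
          (algebraMap R (Localization m.primeCompl) r • f b) := by
        rw [smul_smul, IsUnit.val_inv_mul, one_smul]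
      rw [this, heq]
      exact K.smul_mem _ (K.smul_mem _ haK)
    rcases hnot with hne | hne
    · obtain ⟨r, hr, hrm⟩ := SetLike.not_le_iff_exists.mp hne
      exact hyK (main x y hxK r hrm hr)
    · obtain ⟨r, hr, hrm⟩ := SetLike.not_le_iff_exists.mp hne
      -- symmetric: f x ∈ L, contradiction with hxL
      have mainL : ∀ a b : M, f a ∈ L →
          ∀ r : R, r ∉ m → r ∈ (span R {a}).colon (span R {b}) → f b ∈ L := by
        intro a b haL r hrm' hr'
        rw [mem_colon_span_singleton] at hr'
        obtain ⟨c, hc⟩ := mem_span_singleton.mp hr'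
        have hru : IsUnit (algebraMap R (Localization m.primeCompl) r) :=
          IsLocalization.map_units _ (⟨r, hrm'⟩ : m.primeCompl)
        have heq : algebraMap R (Localization m.primeCompl) r • f b
            = algebraMap R (Localization m.primeCompl) c • f a := by
          rw [algebraMap_smul, algebraMap_smul, ← map_smul, ← map_smul, hc]
        have : f b = (↑hru.unit⁻¹ : Localization m.primeCompl) •
            (algebraMap R (Localization m.primeCompl) r • f b) := by
          rw [smul_smul, IsUnit.val_inv_mul, one_smul]
        rw [this, heq]
        exact L.smul_mem _ (L.smul_mem _ haL)
      exact hxL (mainL y x hyL r hrm hr)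
  · intro h x y
    by_contra hne
    obtain ⟨m, hm, hIm⟩ := Ideal.exists_le_maximal _ hne
    set f := LocalizedModule.mkLinearMap m.primeCompl M with hf
    have key : ∀ a b : M, f a ∈ span (Localization m.primeCompl) {f b} →
        ¬ ((span R {b}).colon (span R {a}) ≤ m) := by
      intro a b hab hle
      obtain ⟨t, ht⟩ := mem_span_singleton.mp hab
      obtain ⟨⟨c, s⟩, hcs⟩ := IsLocalization.mk'_surjective m.primeCompl t
      dsimp only at hcs
      have heq : algebraMap R (Localization m.primeCompl) (s : R) • f a
          = algebraMap R (Localization m.primeCompl) c • f b := by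
        rw [← ht, ← hcs, smul_smul, ← IsLocalization.mk'_spec' (Localization m.primeCompl) c s]
      have h0 : f ((s : R) • a - c • b) = 0 := by
        rw [map_sub, sub_eq_zero, map_smul, map_smul, ← algebraMap_smul
          (Localization m.primeCompl) (s : R) (f a), heq, algebraMap_smul]
      obtain ⟨u, hu⟩ := (IsLocalizedModule.eq_zero_iff m.primeCompl f).mp h0
      have husm : (u : R) * (s : R) ∉ m := (u * s).2
      apply husm
      apply hle
      rw [mem_colon_span_singleton]
      have : ((u : R) * (s : R)) • a = ((u : R) * c) • b := by
        have hu' : (u : R) • ((s : R) • a - c • b) = 0 := hu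
        rw [smul_sub, sub_eq_zero] at hu'
        rw [mul_smul, mul_smul, hu']
      rw [this]
      exact smul_mem _ _ (mem_span_singleton_self b)
    rcases h m (span (Localization m.primeCompl) {f x})
        (span (Localization m.primeCompl) {f y}) with hle | hle
    · exact key x y (hle (mem_span_singleton_self _))
        (le_trans le_sup_right hIm)
    · exact key y x (hle (mem_span_singleton_self _))
        (le_trans le_sup_left hIm)
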